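/- Let k₁, k₂, k₃ > 0, q = √(k₁/k₃), and consider the planar system ζ' = -(k₁k₃/k₂)·sinc²(2γ)·ζ, γ' = -k₂γ - k₃·sinc(2γ)·ζ. Then the function V(ζ,γ) = ζ² + q²γ² has Lie derivative V' = -(k₁k₂/k₃)·[((k₃/k₂)sinc(2γ)ζ)² + γ² + ((k₃/k₂)sinc(2γ)ζ + γ)²], which is negative whenever (ζ,γ) ≠ (0,0). -/

import Mathlib

noncomputable def sinc (a : ℝ) : ℝ := if a = 0 then 1 else Real.sin a / a

theorem stmt_11 (k₁ k₂ k₃ : ℝ) (hk₁ : 0 < k₁) (hk₂ : 0 < k₂) (hk₃ : 0 < k₃)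
    (q : ℝ) (hq : q = Real.sqrt (k₁ / k₃))
    (ζ γ : ℝ → ℝ) (t : ℝ)
    (hζ : HasDerivAt ζ (-(k₁ * k₃ / k₂) * (sinc (2 * γ t)) ^ 2 * ζ t) t)
    (hγ : HasDerivAt γ (-k₂ * γ t - k₃ * sinc (2 * γ t) * ζ t) t) :
    ∀ u : ℝ, HasDerivAt (fun s => (ζ s) ^ 2 + q ^ 2 * (γ s) ^ 2) u t →
      u = -(k₁ * k₂ / k₃) *
            ((k₃ / k₂ * sinc (2 * γ t) * ζ t) ^ 2 + (γ t) ^ 2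
              + (k₃ / k₂ * sinc (2 * γ t) * ζ t + γ t) ^ 2) ∧
      ((ζ t, γ t) ≠ (0, 0) → u < 0) := by
  intro u hu
  have hq2 : q ^ 2 = k₁ / k₃ := by
    rw [hq, Real.sq_sqrt (div_nonneg hk₁.le hk₃.le)]
  have hV : HasDerivAt (fun s => (ζ s) ^ 2 + q ^ 2 * (γ s) ^ 2)
      (2 * ζ t ^ 1 * (-(k₁ * k₃ / k₂) * (sinc (2 * γ t)) ^ 2 * ζ t)
        + q ^ 2 * (2 * γ t ^ 1 * (-k₂ * γ t - k₃ * sinc (2 * γ t) * ζ t))) t := by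
    have h1 : HasDerivAt (fun s => ζ s ^ 2) _ t := hζ.pow 2
    have h2 := (hγ.pow 2).const_mul (q ^ 2)
    simpa [Pi.add_def] using h1.add h2
  have huv := hu.unique hV
  have key : u = -(k₁ * k₂ / k₃) *
      ((k₃ / k₂ * sinc (2 * γ t) * ζ t) ^ 2 + (γ t) ^ 2
        + (k₃ / k₂ * sinc (2 * γ t) * ζ t + γ t) ^ 2) := by
    rw [huv, hq2]
    field_simp
    ring
  refine ⟨key, fun hne => ?_⟩
  have hpos : 0 < (k₃ / k₂ * sinc (2 * γ t) * ζ t) ^ 2 + (γ t) ^ 2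
      + (k₃ / k₂ * sinc (2 * γ t) * ζ t + γ t) ^ 2 := by
    by_cases hγ0 : γ t = 0
    · have hζ0 : ζ t ≠ 0 := by
        intro h; exact hne (by simp [h, hγ0])
      have hs : sinc (2 * γ t) = 1 := by simp [sinc, hγ0]
      have : k₃ / k₂ * sinc (2 * γ t) * ζ t ≠ 0 := by
        rw [hs]; positivity
      nlinarith [sq_pos_of_ne_zero this, sq_nonneg (k₃ / k₂ * sinc (2 * γ t) * ζ t + γ t), sq_nonneg (γ t)]
    · nlinarith [sq_pos_of_ne_zero hγ0, sq_nonneg (k₃ / k₂ * sinc (2 * γ t) * ζ t), sq_nonneg (k₃ / k₂ * sinc (2 * γ t) * ζ t + γ t)]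
  rw [key]
  have : 0 < k₁ * k₂ / k₃ := by positivity
  nlinarith
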